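/- Let α ∈ (0,1), ε ∈ (0,1), K ∈ ℕ with K ≥ 1, let (η_t)_{t≥1} be a sequence of positive reals with the convention η_0^{−1} := 0, let (s̃_t)_{t≥1} and (s_{t,y})_{t≥1, 1≤y≤K} be arbitrary sequences in [0,1], let τ_1 ∈ [0,1], and define τ_{t+1} = τ_t − η_t·g̃(τ_t, s̃_t, (s_{t,y})_{y=1}^K). Then for every integer T ≥ 1: | Σ_{t=1}^T g̃(τ_t, s̃_t, (s_{t,y})_y) | ≤ (1 + (max_{1≤t≤T} η_t)·(1+ε)/(1−ε)) · Σ_{t=1}^T |η_t^{−1} − η_{t−1}^{−1}|. -/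

import Mathlib

/-- The robust pinball subgradient. -/
noncomputable def robustGrad (α ε : ℝ) (K : ℕ) (τ stil : ℝ) (s : Fin K → ℝ) : ℝ :=
  (1 / (1 - ε)) * ((if stil ≤ τ then (1:ℝ) else 0) - (1 - α))
    - (ε / ((K : ℝ) * (1 - ε))) * ∑ y : Fin K, ((if s y ≤ τ then (1:ℝ) else 0) - (1 - α))

/-- telescoping bound on the accumulated robust pinball subgradients under
dynamic learning rates.  The convention `η₀⁻¹ = 0` is encoded by the hypothesis `η 0 = 0`
(in `ℝ`, `(0 : ℝ)⁻¹ = 0`). -/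
lemma robustGrad_le (α ε : ℝ) (hα : α ∈ Set.Ioo (0:ℝ) 1) (hε : ε ∈ Set.Ioo (0:ℝ) 1)
    (K : ℕ) (hK : 1 ≤ K) (τ st : ℝ) (s : Fin K → ℝ) :
    robustGrad α ε K τ st s ≤ (α + ε * (1 - α)) / (1 - ε) := by
  obtain ⟨hε0, hε1⟩ := hε
  obtain ⟨hα0, hα1⟩ := hα
  have h1ε : (0:ℝ) < 1 - ε := by linarith
  have hKpos : (0:ℝ) < K := by exact_mod_cast hK
  have hS : -(K:ℝ) * (1 - α) ≤ ∑ y : Fin K, ((if s y ≤ τ then (1:ℝ) else 0) - (1 - α)) := by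
    calc -(K:ℝ) * (1 - α) = ∑ _y : Fin K, (0 - (1 - α)) := by
          rw [Finset.sum_const, Finset.card_univ, Fintype.card_fin, nsmul_eq_mul]; ring
      _ ≤ _ := by
          apply Finset.sum_le_sum
          intro y _
          have : (0:ℝ) ≤ if s y ≤ τ then (1:ℝ) else 0 := by positivity
          linarith
  have hI : (if st ≤ τ then (1:ℝ) else 0) ≤ 1 := by split <;> norm_num
  have hc2 : (0:ℝ) ≤ ε / ((K:ℝ) * (1 - ε)) := by positivity
  have hc1 : (0:ℝ) ≤ 1 / (1 - ε) := by positivity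
  have key : robustGrad α ε K τ st s
      ≤ (1 / (1 - ε)) * α + (ε / ((K:ℝ) * (1 - ε))) * ((K:ℝ) * (1 - α)) := by
    unfold robustGrad
    have h1 : (1 / (1 - ε)) * ((if st ≤ τ then (1:ℝ) else 0) - (1 - α)) ≤ (1 / (1 - ε)) * α := by
      apply mul_le_mul_of_nonneg_left _ hc1; linarith
    have h2 : -((ε / ((K:ℝ) * (1 - ε))) * ∑ y : Fin K, ((if s y ≤ τ then (1:ℝ) else 0) - (1 - α)))
        ≤ (ε / ((K:ℝ) * (1 - ε))) * ((K:ℝ) * (1 - α)) := by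
      rw [← mul_neg]
      apply mul_le_mul_of_nonneg_left _ hc2
      linarith
    linarith
  calc robustGrad α ε K τ st s ≤ _ := key
    _ = (α + ε * (1 - α)) / (1 - ε) := by field_simp

lemma robustGrad_ge (α ε : ℝ) (hα : α ∈ Set.Ioo (0:ℝ) 1) (hε : ε ∈ Set.Ioo (0:ℝ) 1)
    (K : ℕ) (hK : 1 ≤ K) (τ st : ℝ) (s : Fin K → ℝ) :
    -(((1 - α) + ε * α) / (1 - ε)) ≤ robustGrad α ε K τ st s := by
  obtain ⟨hε0, hε1⟩ := hε
  obtain ⟨hα0, hα1⟩ := hα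
  have h1ε : (0:ℝ) < 1 - ε := by linarith
  have hKpos : (0:ℝ) < K := by exact_mod_cast hK
  have hS : ∑ y : Fin K, ((if s y ≤ τ then (1:ℝ) else 0) - (1 - α)) ≤ (K:ℝ) * α := by
    calc (∑ y : Fin K, ((if s y ≤ τ then (1:ℝ) else 0) - (1 - α)))
        ≤ ∑ _y : Fin K, (1 - (1 - α)) := by
          apply Finset.sum_le_sum
          intro y _
          have : (if s y ≤ τ then (1:ℝ) else 0) ≤ 1 := by split <;> norm_num
          linarith
      _ = (K:ℝ) * α := by
          rw [Finset.sum_const, Finset.card_univ, Fintype.card_fin, nsmul_eq_mul]; ring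
  have hI : (0:ℝ) ≤ (if st ≤ τ then (1:ℝ) else 0) := by positivity
  have hc2 : (0:ℝ) ≤ ε / ((K:ℝ) * (1 - ε)) := by positivity
  have hc1 : (0:ℝ) ≤ 1 / (1 - ε) := by positivity
  have key : (1 / (1 - ε)) * (-(1 - α)) - (ε / ((K:ℝ) * (1 - ε))) * ((K:ℝ) * α)
      ≤ robustGrad α ε K τ st s := by
    unfold robustGrad
    have h1 : (1 / (1 - ε)) * (-(1 - α)) ≤ (1 / (1 - ε)) * ((if st ≤ τ then (1:ℝ) else 0) - (1 - α)) := by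
      apply mul_le_mul_of_nonneg_left _ hc1; linarith
    have h2 : -((ε / ((K:ℝ) * (1 - ε))) * ((K:ℝ) * α))
        ≤ -((ε / ((K:ℝ) * (1 - ε))) * ∑ y : Fin K, ((if s y ≤ τ then (1:ℝ) else 0) - (1 - α))) := by
      rw [neg_le_neg_iff]
      exact mul_le_mul_of_nonneg_left hS hc2
    linarith
  calc -(((1 - α) + ε * α) / (1 - ε))
      = (1 / (1 - ε)) * (-(1 - α)) - (ε / ((K:ℝ) * (1 - ε))) * ((K:ℝ) * α) := by
        field_simp; ring
    _ ≤ _ := key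

lemma robustGrad_of_one_le (α ε : ℝ) (hε : ε ∈ Set.Ioo (0:ℝ) 1)
    (K : ℕ) (hK : 1 ≤ K) (τ st : ℝ) (s : Fin K → ℝ)
    (hτ : 1 ≤ τ) (hst : st ≤ 1) (hs : ∀ y, s y ≤ 1) :
    robustGrad α ε K τ st s = α := by
  obtain ⟨hε0, hε1⟩ := hε
  have h1ε : (1:ℝ) - ε ≠ 0 := by intro h; nlinarith
  have hKpos : (K:ℝ) ≠ 0 := by
    have : (0:ℝ) < K := by exact_mod_cast hK
    linarith
  unfold robustGrad
  rw [if_pos (hst.trans hτ)]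
  have hsum : ∑ y : Fin K, ((if s y ≤ τ then (1:ℝ) else 0) - (1 - α)) = (K:ℝ) * α := by
    have : ∀ y ∈ Finset.univ, ((if s y ≤ τ then (1:ℝ) else 0) - (1 - α)) = (1 - (1 - α)) := by
      intro y _; rw [if_pos ((hs y).trans hτ)]
    rw [Finset.sum_congr rfl this, Finset.sum_const, Finset.card_univ, Fintype.card_fin,
      nsmul_eq_mul]; ring
  rw [hsum]
  field_simp
  ring

lemma robustGrad_of_neg (α ε : ℝ) (hε : ε ∈ Set.Ioo (0:ℝ) 1)
    (K : ℕ) (hK : 1 ≤ K) (τ st : ℝ) (s : Fin K → ℝ)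
    (hτ : τ < 0) (hst : 0 ≤ st) (hs : ∀ y, 0 ≤ s y) :
    robustGrad α ε K τ st s = -(1 - α) := by
  obtain ⟨hε0, hε1⟩ := hε
  have h1ε : (1:ℝ) - ε ≠ 0 := by intro h; nlinarith
  have hKpos : (K:ℝ) ≠ 0 := by
    have : (0:ℝ) < K := by exact_mod_cast hK
    linarith
  unfold robustGrad
  rw [if_neg (by linarith [hst] : ¬ st ≤ τ)]
  have hsum : ∑ y : Fin K, ((if s y ≤ τ then (1:ℝ) else 0) - (1 - α)) = (K:ℝ) * (-(1 - α)) := by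
    have : ∀ y ∈ Finset.univ, ((if s y ≤ τ then (1:ℝ) else 0) - (1 - α)) = (0 - (1 - α)) := by
      intro y _; rw [if_neg (by linarith [hs y] : ¬ s y ≤ τ)]
    rw [Finset.sum_congr rfl this, Finset.sum_const, Finset.card_univ, Fintype.card_fin,
      nsmul_eq_mul]; ring
  rw [hsum]
  field_simp
  ring

theorem nrocp_sum_grad_bounded_dynamic_lr
    (α ε : ℝ) (hα : α ∈ Set.Ioo (0:ℝ) 1) (hε : ε ∈ Set.Ioo (0:ℝ) 1)
    (K : ℕ) (hK : 1 ≤ K)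
    (η : ℕ → ℝ) (hη : ∀ t, 1 ≤ t → 0 < η t) (hη0 : η 0 = 0)
    (stil : ℕ → ℝ) (hstil : ∀ t, 1 ≤ t → stil t ∈ Set.Icc (0:ℝ) 1)
    (s : ℕ → Fin K → ℝ) (hs : ∀ t, 1 ≤ t → ∀ y, s t y ∈ Set.Icc (0:ℝ) 1)
    (τ : ℕ → ℝ) (hτ1 : τ 1 ∈ Set.Icc (0:ℝ) 1)
    (hupd : ∀ t, 1 ≤ t → τ (t + 1) = τ t - η t * robustGrad α ε K (τ t) (stil t) (s t))
    (T : ℕ) (hT : 1 ≤ T) :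
    |∑ t ∈ Finset.Icc 1 T, robustGrad α ε K (τ t) (stil t) (s t)|
      ≤ (1 + (⨆ t ∈ Finset.Icc 1 T, η t) * ((1 + ε) / (1 - ε)))
          * ∑ t ∈ Finset.Icc 1 T, |(η t)⁻¹ - (η (t - 1))⁻¹| := by
  obtain ⟨hα0, hα1⟩ := hα
  obtain ⟨hε0, hε1⟩ := hε
  have h1ε : (0:ℝ) < 1 - ε := by linarith
  set gp := (α + ε * (1 - α)) / (1 - ε) with hgp
  set gm := ((1 - α) + ε * α) / (1 - ε) with hgm
  have hgp0 : 0 ≤ gp := by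
    rw [hgp]; apply div_nonneg _ h1ε.le; nlinarith
  have hgm0 : 0 ≤ gm := by
    rw [hgm]; apply div_nonneg _ h1ε.le; nlinarith
  have hgpm : gp + gm = (1 + ε) / (1 - ε) := by
    rw [hgp, hgm, ← add_div]; ring_nf
  set M := ⨆ t ∈ Finset.Icc 1 T, η t with hM
  -- facts about the supremum
  have hval : ∀ t, (⨆ (_ : t ∈ Finset.Icc 1 T), η t) ≤ ∑ i ∈ Finset.Icc 1 T, |η i| := by
    intro t
    by_cases h : t ∈ Finset.Icc 1 T
    · rw [(ciSup_pos h : (⨆ (_ : t ∈ Finset.Icc 1 T), η t) = η t)]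
      exact (le_abs_self _).trans (Finset.single_le_sum (fun i _ => abs_nonneg (η i)) h)
    · rw [(by simp [h] : (⨆ (_ : t ∈ Finset.Icc 1 T), η t) = 0)]
      exact Finset.sum_nonneg (fun i _ => abs_nonneg (η i))
  have hbdd : BddAbove (Set.range fun t => ⨆ (_ : t ∈ Finset.Icc 1 T), η t) :=
    ⟨∑ i ∈ Finset.Icc 1 T, |η i|, Set.forall_mem_range.2 hval⟩
  have hMle : ∀ t ∈ Finset.Icc 1 T, η t ≤ M := by
    intro t ht
    exact le_ciSup_of_le hbdd t
      (le_of_eq (ciSup_pos ht : (⨆ (_ : t ∈ Finset.Icc 1 T), η t) = η t).symm)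
  have hM0 : 0 ≤ M := by
    have h0 : (0:ℕ) ∉ Finset.Icc 1 T := by simp
    have h1 := le_ciSup hbdd 0
    rwa [(by simp [h0] : (⨆ (_ : 0 ∈ Finset.Icc 1 T), η 0) = 0)] at h1
  -- the invariant
  have inv : ∀ t, 1 ≤ t → (t ≤ T + 1 → -(M * gp) ≤ τ t ∧ τ t ≤ 1 + M * gm) := by
    intro t ht
    induction t, ht using Nat.le_induction with
    | base =>
      intro _
      constructor
      · linarith [hτ1.1, mul_nonneg hM0 hgp0]
      · linarith [hτ1.2, mul_nonneg hM0 hgm0]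
    | succ n hn ih =>
      intro hn1
      have hnT : n ≤ T := by omega
      obtain ⟨hlo, hhi⟩ := ih (by omega)
      have hηn := hη n hn
      have hηM : η n ≤ M := hMle n (Finset.mem_Icc.2 ⟨hn, hnT⟩)
      have hup := hupd n hn
      have hαgp : α ≤ gp := by
        rw [hgp, le_div_iff₀ h1ε]; nlinarith
      have h1αgm : 1 - α ≤ gm := by
        rw [hgm, le_div_iff₀ h1ε]; nlinarith
      rcases lt_or_ge (τ n) 0 with hc | hc
      · -- τ n < 0 : gradient is -(1-α)
        rw [robustGrad_of_neg α ε ⟨hε0, hε1⟩ K hK _ _ _ hc (hstil n hn).1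
          (fun y => (hs n hn y).1), mul_neg, sub_neg_eq_add] at hup
        have e0 : 0 ≤ η n * (1 - α) := mul_nonneg hηn.le (by linarith)
        have e1 : η n * (1 - α) ≤ M * gm := mul_le_mul hηM h1αgm (by linarith) hM0
        constructor
        · linarith
        · linarith
      rcases le_or_gt 1 (τ n) with hc1 | hc1
      · -- 1 ≤ τ n : gradient is α
        rw [robustGrad_of_one_le α ε ⟨hε0, hε1⟩ K hK _ _ _ hc1 (hstil n hn).2
          (fun y => (hs n hn y).2)] at hup
        have e0 : 0 ≤ η n * α := mul_nonneg hηn.le hα0.le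
        have e1 : η n * α ≤ M * gp := mul_le_mul hηM hαgp hα0.le hM0
        constructor
        · linarith
        · linarith
      · -- 0 ≤ τ n < 1 : use the two-sided bound
        have hgl := robustGrad_ge α ε ⟨hα0, hα1⟩ ⟨hε0, hε1⟩ K hK (τ n) (stil n) (s n)
        have hgu := robustGrad_le α ε ⟨hα0, hα1⟩ ⟨hε0, hε1⟩ K hK (τ n) (stil n) (s n)
        have h1 : η n * robustGrad α ε K (τ n) (stil n) (s n) ≤ η n * gp :=
          mul_le_mul_of_nonneg_left hgu hηn.le
        have h2 : -(η n * gm) ≤ η n * robustGrad α ε K (τ n) (stil n) (s n) := by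
          have := mul_le_mul_of_nonneg_left hgl hηn.le
          rwa [mul_neg] at this
        have h3 : η n * gp ≤ M * gp := mul_le_mul_of_nonneg_right hηM hgp0
        have h4 : η n * gm ≤ M * gm := mul_le_mul_of_nonneg_right hηM hgm0
        constructor
        · linarith
        · linarith
  -- rewrite gradient via the update
  have hg_eq : ∀ t, 1 ≤ t →
      robustGrad α ε K (τ t) (stil t) (s t) = (η t)⁻¹ * (τ t - τ (t + 1)) := by
    intro t ht
    have hne := (hη t ht).ne'
    rw [hupd t ht]
    field_simp
    ring
  -- telescoping sum of the inverse-step differences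
  have hΔsum : ∀ n, 1 ≤ n →
      ∑ t ∈ Finset.Icc 1 n, ((η t)⁻¹ - (η (t - 1))⁻¹) = (η n)⁻¹ := by
    intro n hn
    induction n, hn using Nat.le_induction with
    | base => norm_num [hη0]
    | succ n hn ih =>
      rw [Finset.sum_Icc_succ_top (by omega : 1 ≤ n + 1), ih]
      simp only [Nat.add_sub_cancel]
      ring
  -- Abel summation
  have hAbel : ∀ n, 1 ≤ n →
      ∑ t ∈ Finset.Icc 1 n, (η t)⁻¹ * (τ t - τ (t + 1))
        = (∑ t ∈ Finset.Icc 1 n, ((η t)⁻¹ - (η (t - 1))⁻¹) * τ t) - (η n)⁻¹ * τ (n + 1) := by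
    intro n hn
    induction n, hn using Nat.le_induction with
    | base => norm_num [hη0]; ring
    | succ n hn ih =>
      rw [Finset.sum_Icc_succ_top (by omega : 1 ≤ n + 1),
        Finset.sum_Icc_succ_top (by omega : 1 ≤ n + 1), ih]
      simp only [Nat.add_sub_cancel]
      ring
  have hsum_eq : ∑ t ∈ Finset.Icc 1 T, robustGrad α ε K (τ t) (stil t) (s t)
      = ∑ t ∈ Finset.Icc 1 T, ((η t)⁻¹ - (η (t - 1))⁻¹) * (τ t - τ (T + 1)) := by
    rw [Finset.sum_congr rfl (fun t ht => hg_eq t (Finset.mem_Icc.1 ht).1), hAbel T hT]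
    simp only [mul_sub]
    rw [Finset.sum_sub_distrib, ← Finset.sum_mul, hΔsum T hT]
  calc |∑ t ∈ Finset.Icc 1 T, robustGrad α ε K (τ t) (stil t) (s t)|
      = |∑ t ∈ Finset.Icc 1 T, ((η t)⁻¹ - (η (t - 1))⁻¹) * (τ t - τ (T + 1))| := by
        rw [hsum_eq]
    _ ≤ ∑ t ∈ Finset.Icc 1 T, |((η t)⁻¹ - (η (t - 1))⁻¹) * (τ t - τ (T + 1))| :=
        Finset.abs_sum_le_sum_abs _ _
    _ ≤ ∑ t ∈ Finset.Icc 1 T, |(η t)⁻¹ - (η (t - 1))⁻¹| * (1 + M * ((1 + ε) / (1 - ε))) := by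
        apply Finset.sum_le_sum
        intro t ht
        rw [abs_mul]
        apply mul_le_mul_of_nonneg_left _ (abs_nonneg _)
        obtain ⟨ht1, ht2⟩ := Finset.mem_Icc.1 ht
        obtain ⟨ha1, ha2⟩ := inv t ht1 (by omega)
        obtain ⟨hb1, hb2⟩ := inv (T + 1) (by omega) le_rfl
        have hMG : M * ((1 + ε) / (1 - ε)) = M * gp + M * gm := by
          rw [← hgpm]; ring
        rw [abs_sub_le_iff]
        constructor <;> linarith
    _ = (1 + M * ((1 + ε) / (1 - ε))) * ∑ t ∈ Finset.Icc 1 T, |(η t)⁻¹ - (η (t - 1))⁻¹| := by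
        rw [← Finset.sum_mul, mul_comm]
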